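/- Let r ≥ 2 and a_1, …, a_r be integers ≥ 2. The ℂ-algebra R := ℂ[x_1, …, x_r]/(x_i x_j for i ≠ j; a_i x_i^{a_i} − a_j x_j^{a_j} for i ≠ j) has ℂ-dimension μ_A := 2 + Σ_{k=1}^r (a_k − 1). -/

import Mathlib

open MvPolynomial

/-- The defining ideal of the degenerate quantum cohomology ring of `ℙ¹_{A}`. -/
noncomputable def relIdeal (r : ℕ) (a : Fin r → ℕ) : Ideal (MvPolynomial (Fin r) ℂ) :=
  Ideal.span ({p | ∃ i j : Fin r, i ≠ j ∧ p = X i * X j} ∪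
    {p | ∃ i j : Fin r, i ≠ j ∧
      p = C (a i : ℂ) * X i ^ (a i) - C (a j : ℂ) * X j ^ (a j)})

namespace MuAProof

variable (r : ℕ) (a : Fin r → ℕ)

/-- Index type for the basis: `none` = unit, `some none` = top class,
`some (some ⟨i,k⟩)` = `x_i^(k+1)`. -/
abbrev SIdx := Option (Option (Σ i : Fin r, Fin (a i - 1)))

/-- The "coefficient extraction" linear map. -/
noncomputable def psi : MvPolynomial (Fin r) ℂ →ₗ[ℂ] (SIdx r a → ℂ) where
  toFun p s :=
    match s with
    | none => coeff 0 p
    | some none => ∑ i, ((a i : ℂ))⁻¹ * coeff (Finsupp.single i (a i)) p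
    | some (some ⟨i, k⟩) => coeff (Finsupp.single i ((k : ℕ) + 1)) p
  map_add' p q := by
    funext s
    obtain _ | _ | ⟨i, k⟩ := s <;>
      simp [coeff_add, mul_add, Finset.sum_add_distrib]
  map_smul' c p := by
    funext s
    obtain _ | _ | ⟨i, k⟩ := s <;>
      simp [Finset.mul_sum, mul_left_comm]

lemma psi_apply_none (p : MvPolynomial (Fin r) ℂ) : psi r a p none = coeff 0 p := rfl

lemma psi_apply_top (p : MvPolynomial (Fin r) ℂ) :
    psi r a p (some none) = ∑ i, ((a i : ℂ))⁻¹ * coeff (Finsupp.single i (a i)) p := rfl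

lemma psi_apply_ik (p : MvPolynomial (Fin r) ℂ) (i : Fin r) (k : Fin (a i - 1)) :
    psi r a p (some (some ⟨i, k⟩)) = coeff (Finsupp.single i ((k : ℕ) + 1)) p := rfl

lemma not_add_single_le {i j i' : Fin r} (hij : i ≠ j) (n : ℕ) :
    ¬ (Finsupp.single i 1 + Finsupp.single j 1 ≤ Finsupp.single i' n) := by
  intro h
  have hi : (1:ℕ) ≤ Finsupp.single i' n i := by
    have := (Finsupp.le_def.mp h) i
    rwa [Finsupp.add_apply, Finsupp.single_eq_same, Finsupp.single_eq_of_ne' hij.symm,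
      add_zero] at this
  have hj : (1:ℕ) ≤ Finsupp.single i' n j := by
    have := (Finsupp.le_def.mp h) j
    rwa [Finsupp.add_apply, Finsupp.single_eq_same, Finsupp.single_eq_of_ne' hij,
      zero_add] at this
  have e1 : i' = i := by
    by_contra hne
    rw [Finsupp.single_eq_of_ne' hne] at hi; omega
  have e2 : i' = j := by
    by_contra hne
    rw [Finsupp.single_eq_of_ne' hne] at hj; omega
  exact hij (e1 ▸ e2)

lemma not_add_single_le_zero {i j : Fin r} (hij : i ≠ j) :
    ¬ (Finsupp.single i 1 + Finsupp.single j 1 ≤ (0 : Fin r →₀ ℕ)) := by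
  intro h
  have hi := (Finsupp.le_def.mp h) i
  simp [Finsupp.single_apply, hij.symm] at hi

lemma psi_mul_XX (q : MvPolynomial (Fin r) ℂ) {i j : Fin r} (hij : i ≠ j) :
    psi r a (q * (X i * X j)) = 0 := by
  have hXX : (X i * X j : MvPolynomial (Fin r) ℂ)
      = monomial (Finsupp.single i 1 + Finsupp.single j 1) 1 := by
    rw [X, X, monomial_mul, mul_one]
  funext s
  obtain _ | _ | ⟨i', k⟩ := s
  · show coeff 0 (q * (X i * X j)) = 0
    rw [hXX, coeff_mul_monomial', if_neg (not_add_single_le_zero r hij)]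
  · show (∑ i', ((a i' : ℂ))⁻¹ * coeff (Finsupp.single i' (a i')) (q * (X i * X j))) = 0
    rw [Finset.sum_eq_zero]
    intro i' _
    rw [hXX, coeff_mul_monomial', if_neg (not_add_single_le r hij _), mul_zero]
  · show coeff (Finsupp.single i' ((k : ℕ) + 1)) (q * (X i * X j)) = 0
    rw [hXX, coeff_mul_monomial', if_neg (not_add_single_le r hij _)]

lemma single_le_single_iff {i i' : Fin r} {n m : ℕ} (hn : 0 < n) :
    Finsupp.single i n ≤ Finsupp.single i' m ↔ i' = i ∧ n ≤ m := by
  constructor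
  · intro h
    have hi := (Finsupp.le_def.mp h) i
    simp only [Finsupp.single_apply, if_pos rfl] at hi
    rcases eq_or_ne i' i with rfl | h1
    · simp only [if_pos rfl] at hi; exact ⟨rfl, hi⟩
    · simp [h1] at hi; omega
  · rintro ⟨rfl, h⟩
    rw [Finsupp.le_def]
    intro s
    simp only [Finsupp.single_apply]
    split <;> simp [h]

lemma psi_mul_CXpow (ha : ∀ k, 2 ≤ a k) (q : MvPolynomial (Fin r) ℂ) (i : Fin r) :
    psi r a (q * (C (a i : ℂ) * X i ^ (a i)))
      = fun s => if s = some none then coeff 0 q else 0 := by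
  have hM : (C (a i : ℂ) * X i ^ (a i) : MvPolynomial (Fin r) ℂ)
      = monomial (Finsupp.single i (a i)) (a i : ℂ) := C_mul_X_pow_eq_monomial
  have hpos : 0 < a i := by have := ha i; omega
  funext s
  obtain _ | _ | ⟨i', k⟩ := s
  · show coeff 0 (q * (C (a i : ℂ) * X i ^ (a i))) = 0
    rw [hM, coeff_mul_monomial', if_neg]
    intro h
    have := (Finsupp.le_def.mp h) i
    simp [Finsupp.single_apply] at this
    omega
  · show (∑ i', ((a i' : ℂ))⁻¹ * coeff (Finsupp.single i' (a i'))
        (q * (C (a i : ℂ) * X i ^ (a i)))) = coeff 0 q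
    rw [Finset.sum_eq_single i]
    · rw [hM, coeff_mul_monomial', if_pos (le_refl _), tsub_self]
      have : ((a i : ℂ)) ≠ 0 := by
        simp only [ne_eq, Nat.cast_eq_zero]; omega
      field_simp
    · intro j _ hj
      rw [hM, coeff_mul_monomial', if_neg, mul_zero]
      rw [single_le_single_iff r hpos]
      rintro ⟨rfl, -⟩; exact hj rfl
    · intro h; exact absurd (Finset.mem_univ i) h
  · show coeff (Finsupp.single i' ((k : ℕ) + 1)) (q * (C (a i : ℂ) * X i ^ (a i))) = 0
    rw [hM, coeff_mul_monomial', if_neg]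
    rw [single_le_single_iff r hpos]
    rintro ⟨rfl, hle⟩
    have := k.isLt
    omega

/-- The set of `p` such that `ψ (q * p) = 0` for all `q`, as an ideal. -/
noncomputable def W : Ideal (MvPolynomial (Fin r) ℂ) where
  carrier := {p | ∀ q, psi r a (q * p) = 0}
  add_mem' := by intro x y hx hy q; rw [mul_add, map_add, hx, hy, add_zero]
  zero_mem' := by intro q; rw [mul_zero, map_zero]
  smul_mem' := by intro c x hx q; rw [smul_eq_mul, ← mul_assoc]; exact hx _

lemma psi_eq_zero_of_mem (ha : ∀ k, 2 ≤ a k) {p : MvPolynomial (Fin r) ℂ}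
    (hp : p ∈ relIdeal r a) : psi r a p = 0 := by
  have hle : relIdeal r a ≤ W r a := by
    rw [relIdeal, Ideal.span_le]
    rintro p (⟨i, j, hij, rfl⟩ | ⟨i, j, hij, rfl⟩)
    · intro q
      exact psi_mul_XX r a q hij
    · intro q
      rw [mul_sub, map_sub, psi_mul_CXpow r a ha q i, psi_mul_CXpow r a ha q j, sub_self]
  have := hle hp (1 : MvPolynomial (Fin r) ℂ)
  rwa [one_mul] at this


variable (hr : 2 ≤ r)

/-- Basis candidates in the polynomial ring. -/
noncomputable def cand : SIdx r a → MvPolynomial (Fin r) ℂ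
  | none => 1
  | some none => C (a ⟨0, by omega⟩ : ℂ) * X (⟨0, by omega⟩ : Fin r) ^ (a ⟨0, by omega⟩)
  | some (some ⟨i, k⟩) => X i ^ ((k : ℕ) + 1)

/-- The quotient map as a `ℂ`-linear map. -/
noncomputable def ql : MvPolynomial (Fin r) ℂ →ₗ[ℂ] (MvPolynomial (Fin r) ℂ ⧸ relIdeal r a) :=
  (Ideal.Quotient.mkₐ ℂ (relIdeal r a)).toLinearMap

lemma ql_eq (p : MvPolynomial (Fin r) ℂ) : ql r a p = Ideal.Quotient.mk (relIdeal r a) p := rfl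

/-- Basis candidates in the quotient. -/
noncomputable def bb : SIdx r a → (MvPolynomial (Fin r) ℂ ⧸ relIdeal r a) :=
  fun s => ql r a (cand r a hr s)

lemma psi_cand (ha : ∀ k, 2 ≤ a k) (t : SIdx r a) :
    psi r a (cand r a hr t) = fun s => if s = t then 1 else 0 := by
  obtain _ | _ | ⟨i, k⟩ := t
  · funext s
    obtain _ | _ | ⟨i', k'⟩ := s
    · rw [if_pos rfl, psi_apply_none]
      show coeff 0 (1 : MvPolynomial (Fin r) ℂ) = 1
      simp
    · rw [if_neg (by simp), psi_apply_top]
      show (∑ i', ((a i' : ℂ))⁻¹ * coeff (Finsupp.single i' (a i')) (1 : MvPolynomial (Fin r) ℂ))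
        = 0
      refine Finset.sum_eq_zero fun i' _ => ?_
      rw [coeff_one, if_neg, mul_zero]
      intro h
      have := Finsupp.single_eq_zero.mp h.symm
      have := ha i'
      omega
    · rw [if_neg (by simp), psi_apply_ik]
      show coeff (Finsupp.single i' ((k' : ℕ) + 1)) (1 : MvPolynomial (Fin r) ℂ) = 0
      rw [coeff_one, if_neg]
      intro h
      have := Finsupp.single_eq_zero.mp h.symm
      omega
  · have h1 := psi_mul_CXpow r a ha 1 (⟨0, by omega⟩ : Fin r)
    rw [one_mul] at h1
    have h2 : cand r a hr (some none)
        = C (a (⟨0, by omega⟩ : Fin r) : ℂ) * X (⟨0, by omega⟩ : Fin r) ^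
            (a (⟨0, by omega⟩ : Fin r)) := rfl
    rw [h2, h1]
    funext s
    simp
  · have hXp : cand r a hr (some (some ⟨i, k⟩))
      = monomial (Finsupp.single i ((k : ℕ) + 1)) 1 := by
      show (X i ^ ((k : ℕ) + 1) : MvPolynomial (Fin r) ℂ) = _
      exact X_pow_eq_monomial
    have hk := k.isLt
    funext s
    obtain _ | _ | ⟨i', k'⟩ := s
    · rw [if_neg (by simp), psi_apply_none, hXp, coeff_monomial, if_neg]
      intro h
      have := Finsupp.single_eq_zero.mp h
      omega
    · rw [if_neg (by simp), psi_apply_top]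
      refine Finset.sum_eq_zero fun i' _ => ?_
      rw [hXp, coeff_monomial, if_neg, mul_zero]
      intro h
      rcases Finsupp.single_eq_single_iff _ _ _ _ |>.mp h with ⟨rfl, h2⟩ | ⟨h1, -⟩
      · omega
      · omega
    · rw [psi_apply_ik, hXp, coeff_monomial]
      by_cases hst : (⟨i', k'⟩ : Σ i : Fin r, Fin (a i - 1)) = ⟨i, k⟩
      · obtain ⟨rfl, hk'⟩ := Sigma.mk.inj_iff.mp hst
        obtain rfl := eq_of_heq hk'
        rw [if_pos rfl, if_pos rfl]
      · rw [if_neg, if_neg]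
        · intro h
          exact hst (by injection (by injection h : _))
        · intro h
          rcases Finsupp.single_eq_single_iff _ _ _ _ |>.mp h with ⟨rfl, h2⟩ | ⟨h1, -⟩
          · exact hst (by
              obtain rfl : k = k' := Fin.ext (by omega)
              rfl)
          · omega

lemma bb_li (ha : ∀ k, 2 ≤ a k) : LinearIndependent ℂ (bb r a hr) := by
  rw [Fintype.linearIndependent_iff]
  intro c hc s
  have h1 : ql r a (∑ t, c t • cand r a hr t) = 0 := by
    rw [map_sum]
    simp only [map_smul]
    exact hc
  have h2 : (∑ t, c t • cand r a hr t) ∈ relIdeal r a := by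
    rwa [ql_eq, Ideal.Quotient.eq_zero_iff_mem] at h1
  have h4 := congrFun (psi_eq_zero_of_mem r a ha h2) s
  rw [map_sum, Finset.sum_apply] at h4
  simp only [map_smul, Pi.smul_apply, smul_eq_mul, psi_cand r a hr ha,
    mul_ite, mul_one, mul_zero] at h4
  rwa [Finset.sum_ite_eq, if_pos (Finset.mem_univ s)] at h4

lemma XX_mem {i j : Fin r} (hij : i ≠ j) : (X i * X j : MvPolynomial (Fin r) ℂ) ∈ relIdeal r a :=
  Ideal.subset_span (Or.inl ⟨i, j, hij, rfl⟩)

lemma gen2_mem {i j : Fin r} (hij : i ≠ j) :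
    (C (a i : ℂ) * X i ^ (a i) - C (a j : ℂ) * X j ^ (a j) : MvPolynomial (Fin r) ℂ)
      ∈ relIdeal r a :=
  Ideal.subset_span (Or.inr ⟨i, j, hij, rfl⟩)

lemma mono_two_vars_mem {m : Fin r →₀ ℕ} {i j : Fin r} (hij : i ≠ j)
    (hi : 1 ≤ m i) (hj : 1 ≤ m j) :
    (monomial m (1 : ℂ) : MvPolynomial (Fin r) ℂ) ∈ relIdeal r a := by
  have hXX : (X i * X j : MvPolynomial (Fin r) ℂ)
      = monomial (Finsupp.single i 1 + Finsupp.single j 1) 1 := by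
    rw [X, X, monomial_mul, mul_one]
  have hm : m - Finsupp.single i 1 - Finsupp.single j 1
      + (Finsupp.single i 1 + Finsupp.single j 1) = m := by
    ext x
    simp only [Finsupp.add_apply, Finsupp.tsub_apply, Finsupp.single_apply]
    by_cases h1 : i = x
    · subst h1
      rw [if_pos rfl, if_neg (Ne.symm hij)]
      omega
    · rw [if_neg h1]
      by_cases h2 : j = x
      · subst h2
        rw [if_pos rfl]
        omega
      · rw [if_neg h2]
        omega
  have key : (monomial m (1 : ℂ) : MvPolynomial (Fin r) ℂ)
      = monomial (m - Finsupp.single i 1 - Finsupp.single j 1) 1 * (X i * X j) := by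
    rw [hXX, monomial_mul, mul_one, hm]
  rw [key]
  exact Ideal.mul_mem_left _ _ (XX_mem r a hij)

include hr in
lemma X_pow_big_mem (ha : ∀ k, 2 ≤ a k) {i : Fin r} {n : ℕ} (hn : a i < n) :
    (X i ^ n : MvPolynomial (Fin r) ℂ) ∈ relIdeal r a := by
  obtain ⟨j, hji⟩ := Fintype.exists_ne_of_one_lt_card (by simp; omega) i
  obtain ⟨u, hu⟩ : ∃ u, n = a i + u + 1 := ⟨n - a i - 1, by omega⟩
  have key : C (a i : ℂ) * X i ^ (a i + u + 1)
      = X i ^ (u + 1) * (C (a i : ℂ) * X i ^ (a i) - C (a j : ℂ) * X j ^ (a j))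
        + C (a j : ℂ) * (X i ^ u * X j ^ (a j - 1)) * (X i * X j) := by
    obtain ⟨v, hv⟩ : ∃ v, a j = v + 1 := ⟨a j - 1, by have := ha j; omega⟩
    rw [hv, Nat.add_sub_cancel]
    push_cast
    ring
  have h1 : (C (a i : ℂ) * X i ^ n : MvPolynomial (Fin r) ℂ) ∈ relIdeal r a := by
    rw [hu, key]
    exact Ideal.add_mem _ (Ideal.mul_mem_left _ _ (gen2_mem r a (Ne.symm hji)))
      (Ideal.mul_mem_left _ _ (XX_mem r a (Ne.symm hji)))
  have h0 : ((a i : ℂ)) ≠ 0 := by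
    simp only [ne_eq, Nat.cast_eq_zero]
    have := ha i; omega
  have : (X i ^ n : MvPolynomial (Fin r) ℂ)
      = C ((a i : ℂ))⁻¹ * (C (a i : ℂ) * X i ^ n) := by
    rw [← mul_assoc, ← C_mul, inv_mul_cancel₀ h0, C_1, one_mul]
  rw [this]
  exact Ideal.mul_mem_left _ _ h1

lemma bb_top (i : Fin r) :
    ql r a (C (a i : ℂ) * X i ^ (a i)) = bb r a hr (some none) := by
  by_cases h : i = (⟨0, by omega⟩ : Fin r)
  · subst h; rfl
  · show Ideal.Quotient.mk _ _ = Ideal.Quotient.mk _ _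
    rw [Ideal.Quotient.eq]
    exact gen2_mem r a h

include hr in
lemma ql_X_pow_ai (ha : ∀ k, 2 ≤ a k) (i : Fin r) :
    ql r a (X i ^ (a i)) = ((a i : ℂ))⁻¹ • bb r a hr (some none) := by
  have h0 : ((a i : ℂ)) ≠ 0 := by
    simp only [ne_eq, Nat.cast_eq_zero]
    have := ha i; omega
  have h1 : bb r a hr (some none) = (a i : ℂ) • ql r a (X i ^ (a i)) := by
    rw [← bb_top r a hr i, ← map_smul]
    congr 1
    rw [smul_eq_C_mul]
  rw [h1, inv_smul_smul₀ h0]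

include hr in
lemma mk_monomial_mem (ha : ∀ k, 2 ≤ a k) (m : Fin r →₀ ℕ) :
    ql r a (monomial m 1) ∈ Submodule.span ℂ (Set.range (bb r a hr)) := by
  by_cases h0 : m = 0
  · subst h0
    have hc : (monomial (0 : Fin r →₀ ℕ) (1 : ℂ) : MvPolynomial (Fin r) ℂ)
        = cand r a hr none := by
      rw [monomial_zero']
      exact C_1
    rw [hc]
    exact Submodule.subset_span ⟨none, rfl⟩
  · obtain ⟨i, hi⟩ : ∃ i, m i ≠ 0 := by
      by_contra h
      push_neg at h
      exact h0 (by ext x; simp [h x])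
    by_cases h2 : ∃ j, j ≠ i ∧ m j ≠ 0
    · obtain ⟨j, hji, hj⟩ := h2
      have hmem := mono_two_vars_mem r a (Ne.symm hji) (m := m) (by omega) (by omega)
      rw [ql_eq, show Ideal.Quotient.mk (relIdeal r a) (monomial m 1) = 0 from
        Ideal.Quotient.eq_zero_iff_mem.mpr hmem]
      exact Submodule.zero_mem _
    · push_neg at h2
      have hm : m = Finsupp.single i (m i) := by
        ext x
        by_cases hx : x = i
        · subst hx; rw [Finsupp.single_eq_same]
        · rw [Finsupp.single_eq_of_ne' (fun h => hx h.symm), h2 x hx]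
      rw [hm, ← X_pow_eq_monomial]
      set n := m i with hn
      have hn1 : 1 ≤ n := by omega
      rcases lt_trichotomy n (a i) with hlt | heq | hgt
      · refine Submodule.subset_span ⟨some (some ⟨i, ⟨n - 1, by omega⟩⟩), ?_⟩
        have hc : cand r a hr (some (some ⟨i, ⟨n - 1, by omega⟩⟩))
            = X i ^ ((n - 1 : ℕ) + 1) := rfl
        show ql r a _ = _
        rw [hc]
        congr 2
        omega
      · rw [heq]
        rw [ql_X_pow_ai r a hr ha i]
        exact Submodule.smul_mem _ _ (Submodule.subset_span ⟨some none, rfl⟩)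
      · rw [ql_eq, show Ideal.Quotient.mk (relIdeal r a) (X i ^ n) = 0 from
          Ideal.Quotient.eq_zero_iff_mem.mpr (X_pow_big_mem r a hr ha hgt)]
        exact Submodule.zero_mem _

include hr in
lemma bb_span (ha : ∀ k, 2 ≤ a k) :
    ⊤ ≤ Submodule.span ℂ (Set.range (bb r a hr)) := by
  intro x _
  obtain ⟨p, rfl⟩ := Ideal.Quotient.mk_surjective x
  have hp : p ∈ Submodule.span ℂ (Set.range ⇑(MvPolynomial.basisMonomials (Fin r) ℂ)) := by
    rw [(MvPolynomial.basisMonomials (Fin r) ℂ).span_eq]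
    trivial
  rw [MvPolynomial.coe_basisMonomials] at hp
  refine Submodule.span_induction
    (p := fun q _ => Ideal.Quotient.mk (relIdeal r a) q ∈
      Submodule.span ℂ (Set.range (bb r a hr))) ?_ ?_ ?_ ?_ hp
  · rintro q ⟨m, rfl⟩
    rw [← ql_eq]
    exact mk_monomial_mem r a hr ha m
  · show Ideal.Quotient.mk (relIdeal r a) (0 : MvPolynomial (Fin r) ℂ) ∈ _
    rw [map_zero]
    exact Submodule.zero_mem _
  · intro q q' _ _ hq hq'
    rw [← ql_eq, map_add]
    exact Submodule.add_mem _ hq hq'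
  · intro c q _ hq
    rw [← ql_eq, map_smul]
    exact Submodule.smul_mem _ _ hq

end MuAProof

theorem finrank_quotient_eq_muA (r : ℕ) (hr : 2 ≤ r) (a : Fin r → ℕ)
    (ha : ∀ k, 2 ≤ a k) :
    Module.finrank ℂ (MvPolynomial (Fin r) ℂ ⧸ relIdeal r a) = 2 + ∑ k, (a k - 1) := by
  classical
  let bas : Module.Basis (MuAProof.SIdx r a) ℂ (MvPolynomial (Fin r) ℂ ⧸ relIdeal r a) :=
    Module.Basis.mk (MuAProof.bb_li r a hr ha) (MuAProof.bb_span r a hr ha)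
  rw [Module.finrank_eq_card_basis bas]
  simp only [Fintype.card_option, Fintype.card_sigma, Fintype.card_fin]
  omega
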